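/- Let Q(x) := ‖x‖² on a real Hilbert space H. Then for every t ≥ 2 and all x, y ∈ H: ‖x+y‖^t − ‖x‖^t ≤ t·‖x‖^{t−2}·⟨x, y⟩ + (t(t−1)/2)·(‖x‖ + ‖y‖)^{t−2}·‖y‖². -/

import Mathlib

open Real

lemma scalar_aux {a b s : ℝ} (hb : 0 ≤ b) (hba : b ≤ a) (hs : 0 ≤ s) :
    (a ^ s - b ^ s) * b ≤ s * a ^ s * (a - b) := by
  rcases eq_or_lt_of_le hb with rfl | hb0
  · simp
    positivity
  have ha0 : 0 < a := hb0.trans_le hba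
  rcases le_total 1 s with hs1 | hs1
  · -- s ≥ 1 : Bernoulli at b/a
    have h1 : -1 ≤ b / a - 1 := by
      have : 0 ≤ b / a := by positivity
      linarith
    have hB := one_add_mul_self_le_rpow_one_add h1 hs1
    rw [add_sub_cancel] at hB
    -- 1 + s*(b/a - 1) ≤ (b/a)^s
    have hdiv : (b / a) ^ s = b ^ s / a ^ s := div_rpow hb ha0.le s
    rw [hdiv] at hB
    have has : 0 < a ^ s := rpow_pos_of_pos ha0 s
    -- a^s - b^s ≤ s * a^s * (1 - b/a)
    have h2 : a ^ s - b ^ s ≤ s * a ^ s * (1 - b / a) := by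
      have := mul_le_mul_of_nonneg_right hB has.le
      rw [div_mul_cancel₀ _ has.ne'] at this
      nlinarith
    have h3 : (1 - b / a) * b ≤ a - b := by
      have hnn : 0 ≤ 1 - b / a := by
        have : b / a ≤ 1 := (div_le_one ha0).mpr hba
        linarith
      calc (1 - b / a) * b ≤ (1 - b / a) * a := mul_le_mul_of_nonneg_left hba hnn
        _ = a - b := by field_simp
    calc (a ^ s - b ^ s) * b ≤ (s * a ^ s * (1 - b / a)) * b := by
          apply mul_le_mul_of_nonneg_right h2 hb
      _ = (s * a ^ s) * ((1 - b / a) * b) := by ring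
      _ ≤ (s * a ^ s) * (a - b) := by
          apply mul_le_mul_of_nonneg_left h3 (by positivity)
  · -- s ≤ 1 : reversed Bernoulli at a/b
    have h1 : -1 ≤ a / b - 1 := by
      have : 0 ≤ a / b := by positivity
      linarith
    have hB := rpow_one_add_le_one_add_mul_self h1 hs hs1
    rw [add_sub_cancel] at hB
    have hdiv : (a / b) ^ s = a ^ s / b ^ s := div_rpow ha0.le hb0.le s
    rw [hdiv] at hB
    have hbs : 0 < b ^ s := rpow_pos_of_pos hb0 s
    have h2 : a ^ s - b ^ s ≤ s * b ^ s * (a / b - 1) := by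
      have := mul_le_mul_of_nonneg_right hB hbs.le
      rw [div_mul_cancel₀ _ hbs.ne'] at this
      nlinarith
    have hab : b ^ s ≤ a ^ s := rpow_le_rpow hb0.le hba hs
    calc (a ^ s - b ^ s) * b ≤ (s * b ^ s * (a / b - 1)) * b :=
          mul_le_mul_of_nonneg_right h2 hb
      _ = s * b ^ s * (a - b) := by field_simp
      _ ≤ s * a ^ s * (a - b) := by
          apply mul_le_mul_of_nonneg_right _ (by linarith)
          apply mul_le_mul_of_nonneg_left hab hs


section Vec
variable {H : Type*} [NormedAddCommGroup H] [InnerProductSpace ℝ H]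

lemma vec_aux1 {s : ℝ} (hs : 0 ≤ s) {a b : H} (hba : ‖b‖ ≤ ‖a‖) :
    ‖(‖a‖ ^ s) • a - (‖b‖ ^ s) • b‖ ≤ (1 + s) * ‖a‖ ^ s * ‖a - b‖ := by
  have key : (‖a‖ ^ s) • a - (‖b‖ ^ s) • b
      = (‖a‖ ^ s) • (a - b) + (‖a‖ ^ s - ‖b‖ ^ s) • b := by
    rw [smul_sub, sub_smul]; abel
  rw [key]
  have hmono : ‖b‖ ^ s ≤ ‖a‖ ^ s := rpow_le_rpow (norm_nonneg b) hba hs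
  calc ‖(‖a‖ ^ s) • (a - b) + (‖a‖ ^ s - ‖b‖ ^ s) • b‖
      ≤ ‖(‖a‖ ^ s) • (a - b)‖ + ‖(‖a‖ ^ s - ‖b‖ ^ s) • b‖ := norm_add_le _ _
    _ = (‖a‖ ^ s) * ‖a - b‖ + (‖a‖ ^ s - ‖b‖ ^ s) * ‖b‖ := by
        rw [norm_smul, norm_smul, Real.norm_eq_abs, Real.norm_eq_abs,
          abs_of_nonneg (by positivity), abs_of_nonneg (by linarith)]
    _ ≤ (‖a‖ ^ s) * ‖a - b‖ + s * ‖a‖ ^ s * (‖a‖ - ‖b‖) :=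
        add_le_add_right (scalar_aux (norm_nonneg b) hba hs) _
    _ ≤ (‖a‖ ^ s) * ‖a - b‖ + s * ‖a‖ ^ s * ‖a - b‖ := by
        apply add_le_add_right
        apply mul_le_mul_of_nonneg_left (norm_sub_norm_le a b) (by positivity)
    _ = (1 + s) * ‖a‖ ^ s * ‖a - b‖ := by ring
end Vec

theorem hilbert_power_expansion_bound (H : Type*) [NormedAddCommGroup H]
    [InnerProductSpace ℝ H] (t : ℝ) (ht : 2 ≤ t) (x y : H) :
    ‖x + y‖ ^ t - ‖x‖ ^ t ≤
      t * ‖x‖ ^ (t - 2) * (inner ℝ x y : ℝ) +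
        t * (t - 1) / 2 * (‖x‖ + ‖y‖) ^ (t - 2) * ‖y‖ ^ 2 := by
  have ht1 : (1 : ℝ) < t := by linarith
  have hs : (0 : ℝ) ≤ t - 2 := by linarith
  set s : ℝ := t - 2 with hs_def
  set R : ℝ := ‖x‖ + ‖y‖ with hR_def
  set G : ℝ → ℝ := fun θ => t * ‖x + θ • y‖ ^ s * (inner ℝ (x + θ • y) y : ℝ) with hG_def
  -- derivative
  have hpath : ∀ θ : ℝ, HasDerivAt (fun θ : ℝ => x + θ • y) y θ := fun θ =>
    ((hasDerivAt_id θ).smul_const y).const_add x |>.congr_deriv (by simp)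
  have hderiv : ∀ θ : ℝ, HasDerivAt (fun θ : ℝ => ‖x + θ • y‖ ^ t) (G θ) θ := by
    intro θ
    have h1 := (hasFDerivAt_norm_rpow (x + θ • y) ht1).comp_hasDerivAt θ (hpath θ)
    exact h1.congr_deriv (by simp only [hG_def, hs_def, ContinuousLinearMap.smul_apply, innerSL_apply_apply, smul_eq_mul])
  -- continuity of G
  have hcont : Continuous G := by
    have hc : Continuous fun θ : ℝ => x + θ • y := by continuity
    apply Continuous.mul
    · exact continuous_const.mul ((hc.norm).rpow_const (fun θ => Or.inr hs))
    · exact hc.inner continuous_const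
  -- pointwise bound on G
  have hbound : ∀ θ ∈ Set.Icc (0:ℝ) 1,
      G θ ≤ G 0 + (t * (t - 1) * R ^ s * ‖y‖ ^ 2) * θ := by
    intro θ hθ
    obtain ⟨hθ0, hθ1⟩ := hθ
    set a : H := x + θ • y with ha_def
    have hax : a - x = θ • y := by rw [ha_def]; abel
    have haR : ‖a‖ ≤ R := by
      calc ‖a‖ ≤ ‖x‖ + ‖θ • y‖ := norm_add_le _ _
        _ ≤ ‖x‖ + ‖y‖ := by
            rw [norm_smul, Real.norm_eq_abs, abs_of_nonneg hθ0]
            nlinarith [norm_nonneg y]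
    have hxR : ‖x‖ ≤ R := by rw [hR_def]; nlinarith [norm_nonneg y]
    have hvec : ‖(‖a‖ ^ s) • a - (‖x‖ ^ s) • x‖ ≤ (1 + s) * R ^ s * (θ * ‖y‖) := by
      rcases le_total ‖x‖ ‖a‖ with h | h
      · calc ‖(‖a‖ ^ s) • a - (‖x‖ ^ s) • x‖ ≤ (1 + s) * ‖a‖ ^ s * ‖a - x‖ := vec_aux1 hs h
          _ ≤ (1 + s) * R ^ s * (θ * ‖y‖) := by
              rw [hax, norm_smul, Real.norm_eq_abs, abs_of_nonneg hθ0]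
              apply mul_le_mul_of_nonneg_right _ (by positivity)
              exact mul_le_mul_of_nonneg_left
                (rpow_le_rpow (norm_nonneg a) haR hs) (by linarith)
      · calc ‖(‖a‖ ^ s) • a - (‖x‖ ^ s) • x‖ = ‖(‖x‖ ^ s) • x - (‖a‖ ^ s) • a‖ :=
              norm_sub_rev _ _
          _ ≤ (1 + s) * ‖x‖ ^ s * ‖x - a‖ := vec_aux1 hs h
          _ ≤ (1 + s) * R ^ s * (θ * ‖y‖) := by
              rw [norm_sub_rev, hax, norm_smul, Real.norm_eq_abs, abs_of_nonneg hθ0]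
              apply mul_le_mul_of_nonneg_right _ (by positivity)
              exact mul_le_mul_of_nonneg_left
                (rpow_le_rpow (norm_nonneg x) hxR hs) (by linarith)
    have hGdiff : G θ - G 0 = t * (inner ℝ ((‖a‖ ^ s) • a - (‖x‖ ^ s) • x) y : ℝ) := by
      simp only [hG_def, zero_smul, add_zero, inner_sub_left, real_inner_smul_left]
      ring
    have hip : (inner ℝ ((‖a‖ ^ s) • a - (‖x‖ ^ s) • x) y : ℝ)
        ≤ (1 + s) * R ^ s * (θ * ‖y‖) * ‖y‖ :=
      le_trans (real_inner_le_norm _ _) (mul_le_mul_of_nonneg_right hvec (norm_nonneg y))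
    have ht0 : (0:ℝ) ≤ t := by linarith
    have := mul_le_mul_of_nonneg_left hip ht0
    have heq : t * ((1 + s) * R ^ s * (θ * ‖y‖) * ‖y‖)
        = (t * (t - 1) * R ^ s * ‖y‖ ^ 2) * θ := by
      rw [hs_def]; ring
    linarith [hGdiff ▸ this, heq ▸ this]
  -- fundamental theorem of calculus
  have hFTC : ∫ θ in (0:ℝ)..1, G θ = ‖x + y‖ ^ t - ‖x‖ ^ t := by
    have := intervalIntegral.integral_eq_sub_of_hasDerivAt
      (fun θ _ => hderiv θ) (hcont.intervalIntegrable 0 1)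
    simpa using this
  -- integral comparison
  have hint : ∫ θ in (0:ℝ)..1, G θ
      ≤ ∫ θ in (0:ℝ)..1, (G 0 + (t * (t - 1) * R ^ s * ‖y‖ ^ 2) * θ) := by
    apply intervalIntegral.integral_mono_on (by norm_num)
      (hcont.intervalIntegrable 0 1)
      (by apply Continuous.intervalIntegrable; continuity)
      hbound
  have hval : ∫ θ in (0:ℝ)..1, (G 0 + (t * (t - 1) * R ^ s * ‖y‖ ^ 2) * θ)
      = G 0 + (t * (t - 1) * R ^ s * ‖y‖ ^ 2) / 2 := by
    rw [intervalIntegral.integral_add (by apply Continuous.intervalIntegrable; continuity)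
      (by apply Continuous.intervalIntegrable; continuity),
      intervalIntegral.integral_const, intervalIntegral.integral_const_mul, integral_id]
    norm_num
    ring
  have hG0 : G 0 = t * ‖x‖ ^ s * (inner ℝ x y : ℝ) := by simp [hG_def]
  rw [← hFTC]
  rw [hval, hG0] at hint
  calc ∫ θ in (0:ℝ)..1, G θ
      ≤ t * ‖x‖ ^ s * (inner ℝ x y : ℝ) + (t * (t - 1) * R ^ s * ‖y‖ ^ 2) / 2 := hint
    _ = t * ‖x‖ ^ (t-2) * (inner ℝ x y : ℝ) + t * (t - 1) / 2 * R ^ (t-2) * ‖y‖ ^ 2 := by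
        rw [hs_def]; ring
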